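/- Let (c_t) be a solution of Smoluchowski's equation with multiplicative kernel and ⟨c_0, m⟩ < ∞. Then the identity (the correspondingly extended weak formulation) ⟨c_t,f⟩ - ⟨c_0,f⟩ = (1/2)∫₀ᵗ Σ_{m,m'} m m' c_s(m) c_s(m')(f(m+m') - f(m) - f(m')) ds holds for all bounded nonnegative f : ℕ → [0,∞), not just compactly supported ones. -/

import Mathlib

open MeasureTheory


open Filter

/-- A `tsum` over `ℕ × ℕ` of a.e.-strongly-measurable functions, a.e. summable,
is a.e. strongly measurable. -/
lemma smol_aesm_tsum {T : ℕ × ℕ → ℝ → ℝ} {μ : Measure ℝ}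
    (hmeas : ∀ p, AEStronglyMeasurable (T p) μ)
    (hsum : ∀ᵐ s ∂μ, Summable (fun p => T p s)) :
    AEStronglyMeasurable (fun s => ∑' p, T p s) μ := by
  have htend : Tendsto (fun n : ℕ => Finset.range n ×ˢ Finset.range n) atTop atTop := by
    have h1 : Tendsto (fun n : ℕ => (Finset.range n, Finset.range n)) atTop
        ((atTop : Filter (Finset ℕ)) ×ˢ (atTop : Filter (Finset ℕ))) :=
      tendsto_finset_range.prodMk tendsto_finset_range
    rw [Filter.prod_atTop_atTop_eq] at h1
    exact Filter.tendsto_finset_prod_atTop.comp h1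
  refine aestronglyMeasurable_of_tendsto_ae
    (f := fun n s => ∑ p ∈ Finset.range n ×ˢ Finset.range n, T p s) atTop ?_ ?_
  · exact fun n => Finset.aestronglyMeasurable_fun_sum _ fun p _ => hmeas p
  · filter_upwards [hsum] with s hs
    exact hs.hasSum.comp htend

lemma smol_term_norm_le {c' : ℕ → ℝ} (hc' : ∀ m, 0 ≤ c' m) {C : ℝ} {g : ℕ → ℝ}
    (hg0 : ∀ m, 0 ≤ g m) (hgC : ∀ m, g m ≤ C) (p : ℕ × ℕ) :
    ‖(p.1 : ℝ) * (p.2 : ℝ) * c' p.1 * c' p.2 * (g (p.1 + p.2) - g p.1 - g p.2)‖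
      ≤ (2 * C) * (((p.1 : ℝ) * c' p.1) * ((p.2 : ℝ) * c' p.2)) := by
  obtain ⟨m, m'⟩ := p
  have hA : 0 ≤ (m : ℝ) * (m' : ℝ) * c' m * c' m' := by
    have := hc' m; have := hc' m'; positivity
  have hd : |g (m + m') - g m - g m'| ≤ 2 * C := by
    have h1 := hg0 (m + m'); have h2 := hg0 m; have h3 := hg0 m'
    have h4 := hgC (m + m'); have h5 := hgC m; have h6 := hgC m'
    rw [abs_le]; constructor <;> nlinarith
  rw [Real.norm_eq_abs, abs_mul, abs_of_nonneg hA]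
  calc (m : ℝ) * (m' : ℝ) * c' m * c' m' * |g (m + m') - g m - g m'|
      ≤ (m : ℝ) * (m' : ℝ) * c' m * c' m' * (2 * C) := mul_le_mul_of_nonneg_left hd hA
    _ = (2 * C) * (((m : ℝ) * c' m) * ((m' : ℝ) * c' m')) := by ring

lemma smol_prodmass_summable {c' : ℕ → ℝ} (hc' : ∀ m, 0 ≤ c' m)
    (hmass : Summable fun m : ℕ => (m : ℝ) * c' m) :
    Summable (fun p : ℕ × ℕ => ((p.1 : ℝ) * c' p.1) * ((p.2 : ℝ) * c' p.2)) :=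
  hmass.mul_of_nonneg hmass (fun m => mul_nonneg (Nat.cast_nonneg m) (hc' m))
    (fun m => mul_nonneg (Nat.cast_nonneg m) (hc' m))

lemma smol_term_summable {c' : ℕ → ℝ} (hc' : ∀ m, 0 ≤ c' m)
    (hmass : Summable fun m : ℕ => (m : ℝ) * c' m) {C : ℝ} {g : ℕ → ℝ}
    (hg0 : ∀ m, 0 ≤ g m) (hgC : ∀ m, g m ≤ C) :
    Summable (fun p : ℕ × ℕ =>
      (p.1 : ℝ) * (p.2 : ℝ) * c' p.1 * c' p.2 * (g (p.1 + p.2) - g p.1 - g p.2)) := by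
  apply Summable.of_norm
  exact Summable.of_nonneg_of_le (fun p => norm_nonneg _) (smol_term_norm_le hc' hg0 hgC)
    ((smol_prodmass_summable hc' hmass).mul_left (2 * C))

lemma smol_iter_eq_prod {c' : ℕ → ℝ} (hc' : ∀ m, 0 ≤ c' m)
    (hmass : Summable fun m : ℕ => (m : ℝ) * c' m) {C : ℝ} {g : ℕ → ℝ}
    (hg0 : ∀ m, 0 ≤ g m) (hgC : ∀ m, g m ≤ C) :
    (∑' m : ℕ, ∑' m' : ℕ, (m : ℝ) * (m' : ℝ) * c' m * c' m' * (g (m + m') - g m - g m'))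
      = ∑' p : ℕ × ℕ,
          (p.1 : ℝ) * (p.2 : ℝ) * c' p.1 * c' p.2 * (g (p.1 + p.2) - g p.1 - g p.2) := by
  have h := smol_term_summable hc' hmass hg0 hgC
  exact (Summable.tsum_prod' h (fun m => h.prod_factor m)).symm

lemma smol_prodmass_tsum {c' : ℕ → ℝ} (hc' : ∀ m, 0 ≤ c' m)
    (hmass : Summable fun m : ℕ => (m : ℝ) * c' m) :
    (∑' p : ℕ × ℕ, ((p.1 : ℝ) * c' p.1) * ((p.2 : ℝ) * c' p.2))
      = (∑' m : ℕ, (m : ℝ) * c' m) ^ 2 := by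
  have hn : Summable fun m : ℕ => ‖(m : ℝ) * c' m‖ := by
    refine hmass.congr fun m => ?_
    rw [Real.norm_eq_abs, abs_of_nonneg (mul_nonneg (Nat.cast_nonneg m) (hc' m))]
  rw [← tsum_mul_tsum_of_summable_norm hn hn, sq]

lemma smol_norm_tsum_le {c' : ℕ → ℝ} (hc' : ∀ m, 0 ≤ c' m)
    (hmass : Summable fun m : ℕ => (m : ℝ) * c' m) {C : ℝ} {g : ℕ → ℝ}
    (hg0 : ∀ m, 0 ≤ g m) (hgC : ∀ m, g m ≤ C) :
    ‖∑' p : ℕ × ℕ,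
        (p.1 : ℝ) * (p.2 : ℝ) * c' p.1 * c' p.2 * (g (p.1 + p.2) - g p.1 - g p.2)‖
      ≤ (2 * C) * (∑' m : ℕ, (m : ℝ) * c' m) ^ 2 := by
  have hsn : Summable (fun p : ℕ × ℕ =>
      ‖(p.1 : ℝ) * (p.2 : ℝ) * c' p.1 * c' p.2 * (g (p.1 + p.2) - g p.1 - g p.2)‖) :=
    Summable.of_nonneg_of_le (fun p => norm_nonneg _) (smol_term_norm_le hc' hg0 hgC)
      ((smol_prodmass_summable hc' hmass).mul_left (2 * C))
  calc ‖∑' p : ℕ × ℕ,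
        (p.1 : ℝ) * (p.2 : ℝ) * c' p.1 * c' p.2 * (g (p.1 + p.2) - g p.1 - g p.2)‖
      ≤ ∑' p : ℕ × ℕ,
        ‖(p.1 : ℝ) * (p.2 : ℝ) * c' p.1 * c' p.2 * (g (p.1 + p.2) - g p.1 - g p.2)‖ :=
        norm_tsum_le_tsum_norm hsn
    _ ≤ ∑' p : ℕ × ℕ, (2 * C) * (((p.1 : ℝ) * c' p.1) * ((p.2 : ℝ) * c' p.2)) :=
        Summable.tsum_le_tsum (smol_term_norm_le hc' hg0 hgC) hsn
          ((smol_prodmass_summable hc' hmass).mul_left (2 * C))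
    _ = (2 * C) * (∑' m : ℕ, (m : ℝ) * c' m) ^ 2 := by
        rw [tsum_mul_left, smol_prodmass_tsum hc' hmass]


/-- For a solution of Smoluchowski's equation with multiplicative kernel (weak formulation
for compactly supported nonnegative test functions) whose mass is nonincreasing with finite
initial mass, the weak formulation extends to all bounded nonnegative test functions. -/
theorem stmt4 (c : ℝ → ℕ → ℝ)
    (hnn : ∀ t, 0 ≤ t → ∀ m, 0 ≤ c t m)
    (hcont : ∀ m, ContinuousOn (fun t => c t m) (Set.Ici 0))
    (hint : ∀ t, 0 ≤ t →
      IntervalIntegrable (fun s => (∑' m : ℕ, (m : ℝ) * c s m)^2) volume 0 t)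
    (hmass0 : Summable (fun m : ℕ => (m : ℝ) * c 0 m))
    (hmassdec : ∀ t, 0 ≤ t → ∑' m : ℕ, (m : ℝ) * c t m ≤ ∑' m : ℕ, (m : ℝ) * c 0 m)
    (hweak : ∀ f : ℕ → ℝ, (∀ m, 0 ≤ f m) → f 0 = 0 → (∃ b : ℕ, ∀ m, b ≤ m → f m = 0) →
      ∀ t, 0 ≤ t →
        (∑' m : ℕ, c t m * f m) - (∑' m : ℕ, c 0 m * f m)
          = (1/2) * ∫ s in (0:ℝ)..t, ∑' m : ℕ, ∑' m' : ℕ,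
              (m : ℝ) * (m' : ℝ) * c s m * c s m' * (f (m + m') - f m - f m')) :
    ∀ f : ℕ → ℝ, (∀ m, 0 ≤ f m) → f 0 = 0 → (∃ C : ℝ, ∀ m, f m ≤ C) →
      ∀ t, 0 ≤ t →
        (∑' m : ℕ, c t m * f m) - (∑' m : ℕ, c 0 m * f m)
          = (1/2) * ∫ s in (0:ℝ)..t, ∑' m : ℕ, ∑' m' : ℕ,
              (m : ℝ) * (m' : ℝ) * c s m * c s m' * (f (m + m') - f m - f m') := by
  have hM0nn : 0 ≤ ∑' m : ℕ, (m : ℝ) * c 0 m :=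
    tsum_nonneg fun m => mul_nonneg (Nat.cast_nonneg m) (hnn 0 le_rfl m)
  -- Step 1: the mass is summable at every nonnegative time
  have hsummass : ∀ t, 0 ≤ t → Summable (fun m : ℕ => (m : ℝ) * c t m) := by
    intro t ht
    apply summable_of_sum_range_le (c := ∑' m : ℕ, (m : ℝ) * c 0 m)
      (fun m => mul_nonneg (Nat.cast_nonneg m) (hnn t ht m))
    intro n
    match n with
    | 0 => simpa using hM0nn
    | Nat.succ b =>
      set g : ℕ → ℝ := fun m => if m ≤ b then (m : ℝ) else 0 with hgdef
      have hg0 : ∀ m, 0 ≤ g m := fun m => by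
        simp only [g]; split_ifs; exacts [Nat.cast_nonneg _, le_rfl]
      have hgz : g 0 = 0 := by simp [g]
      have key := hweak g hg0 hgz ⟨b + 1, fun m hm => by
        simp only [g]; rw [if_neg (by omega)]⟩ t ht
      have e1 : ∀ u : ℝ, (∑' m : ℕ, c u m * g m)
          = ∑ m ∈ Finset.range (b+1), (m : ℝ) * c u m := by
        intro u
        rw [tsum_eq_sum (s := Finset.range (b+1)) ?_]
        · refine Finset.sum_congr rfl fun m hm => ?_
          have hmb : m ≤ b := by
            have := Finset.mem_range.mp hm; omega
          simp [g, hmb, mul_comm]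
        · intro m hm
          have hmb : ¬ m ≤ b := by
            have h2 : ¬ m < b + 1 := fun h => hm (Finset.mem_range.mpr h)
            omega
          simp [g, hmb]
      have hDle : ∀ s : ℝ, 0 ≤ s →
          (∑' m : ℕ, ∑' m' : ℕ,
            (m : ℝ) * (m' : ℝ) * c s m * c s m' * (g (m + m') - g m - g m')) ≤ 0 := by
        intro s hs
        refine tsum_nonpos fun m => tsum_nonpos fun m' => ?_
        have hA : 0 ≤ (m : ℝ) * (m' : ℝ) * c s m * c s m' := by
          have := hnn s hs m; have := hnn s hs m'; positivity
        have hg' : g (m + m') - g m - g m' ≤ 0 := by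
          by_cases h : m + m' ≤ b
          · have h1 : m ≤ b := by omega
            have h2 : m' ≤ b := by omega
            simp only [hgdef, if_pos h, if_pos h1, if_pos h2]
            push_cast; linarith
          · simp only [hgdef, if_neg h]
            split_ifs <;>
              linarith [show (0:ℝ) ≤ (m : ℝ) from Nat.cast_nonneg m,
                show (0:ℝ) ≤ (m' : ℝ) from Nat.cast_nonneg m']
        nlinarith [hA, hg']
      have hI : (∫ s in (0:ℝ)..t, ∑' m : ℕ, ∑' m' : ℕ,
          (m : ℝ) * (m' : ℝ) * c s m * c s m' * (g (m + m') - g m - g m')) ≤ 0 := by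
        rw [intervalIntegral.integral_of_le ht]
        refine integral_nonpos_of_ae ?_
        exact (ae_restrict_mem measurableSet_Ioc).mono fun s hs => hDle s hs.1.le
      have h0le : ∑ m ∈ Finset.range (b+1), (m : ℝ) * c 0 m ≤ ∑' m : ℕ, (m : ℝ) * c 0 m :=
        Summable.sum_le_tsum _ (fun m _ => mul_nonneg (Nat.cast_nonneg m) (hnn 0 le_rfl m)) hmass0
      rw [e1 t, e1 0] at key
      linarith
  intro f hf hfz hbdd t ht
  obtain ⟨C, hC⟩ := hbdd
  have hCnn : 0 ≤ C := le_trans (hf 0) (hC 0)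
  set F : ℕ → ℕ → ℝ := fun b m => if m < b then f m else 0 with hFdef
  have hF0 : ∀ b m, 0 ≤ F b m := fun b m => by
    simp only [hFdef]; split_ifs; exacts [hf m, le_rfl]
  have hFC : ∀ b m, F b m ≤ C := fun b m => by
    simp only [hFdef]; split_ifs; exacts [hC m, hCnn]
  have hFeq : ∀ b m, m < b → F b m = f m := fun b m hm => by simp [hFdef, hm]
  have hkey : ∀ b : ℕ,
      (∑' m : ℕ, c t m * F b m) - (∑' m : ℕ, c 0 m * F b m)
        = (1/2) * ∫ s in (0:ℝ)..t, ∑' m : ℕ, ∑' m' : ℕ,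
            (m : ℝ) * (m' : ℝ) * c s m * c s m' * (F b (m + m') - F b m - F b m') :=
    fun b => hweak (F b) (hF0 b) (by simp [hFdef, hfz])
      ⟨b, fun m hm => by simp only [hFdef]; rw [if_neg (by omega)]⟩ t ht
  have hsumf : ∀ s, 0 ≤ s → Summable (fun m : ℕ => c s m * f m) := by
    intro s hs
    refine Summable.of_nonneg_of_le (fun m => mul_nonneg (hnn s hs m) (hf m))
      (fun m => ?_) ((hsummass s hs).mul_left C)
    cases m with
    | zero => simp [hfz]
    | succ k =>
      have h1 : (1:ℝ) ≤ ((k+1 : ℕ) : ℝ) := by exact_mod_cast Nat.succ_le_succ (Nat.zero_le k)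
      calc c s (k+1) * f (k+1) ≤ c s (k+1) * C :=
            mul_le_mul_of_nonneg_left (hC _) (hnn s hs _)
        _ = C * c s (k+1) := mul_comm _ _
        _ ≤ C * (((k+1 : ℕ) : ℝ) * c s (k+1)) :=
            mul_le_mul_of_nonneg_left (le_mul_of_one_le_left (hnn s hs _) h1) hCnn
  have hLHS : ∀ u : ℝ, 0 ≤ u → Filter.Tendsto (fun b : ℕ => ∑' m : ℕ, c u m * F b m)
      Filter.atTop (nhds (∑' m : ℕ, c u m * f m)) := by
    intro u hu
    have he : ∀ b : ℕ, (∑' m : ℕ, c u m * F b m) = ∑ m ∈ Finset.range b, c u m * f m := by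
      intro b
      rw [tsum_eq_sum (s := Finset.range b) ?_]
      · exact Finset.sum_congr rfl fun m hm => by
          rw [hFeq b m (Finset.mem_range.mp hm)]
      · intro m hm
        have h2 : ¬ m < b := fun h => hm (Finset.mem_range.mpr h)
        simp [hFdef, h2]
    exact Filter.Tendsto.congr (fun b => (he b).symm) (hsumf u hu).hasSum.tendsto_sum_nat
  have hIoc : Set.uIoc (0:ℝ) t = Set.Ioc 0 t := Set.uIoc_of_le ht
  have hmeasT : ∀ (g : ℕ → ℝ) (p : ℕ × ℕ), AEStronglyMeasurable
      (fun s => (p.1 : ℝ) * (p.2 : ℝ) * c s p.1 * c s p.2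
        * (g (p.1 + p.2) - g p.1 - g p.2))
      (volume.restrict (Set.uIoc (0:ℝ) t)) := by
    intro g p
    rw [hIoc]
    have hsub : Set.Ioc (0:ℝ) t ⊆ Set.Ici 0 := fun s hs => le_of_lt hs.1
    refine ContinuousOn.aestronglyMeasurable ?_ measurableSet_Ioc
    exact ((continuousOn_const.mul ((hcont p.1).mono hsub)).mul
      ((hcont p.2).mono hsub)).mul continuousOn_const
  have haes : ∀ (g : ℕ → ℝ), (∀ m, 0 ≤ g m) → (∀ m, g m ≤ C) → AEStronglyMeasurable
      (fun s => ∑' m : ℕ, ∑' m' : ℕ, (m : ℝ) * (m' : ℝ) * c s m * c s m'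
        * (g (m + m') - g m - g m'))
      (volume.restrict (Set.uIoc (0:ℝ) t)) := by
    intro g hg0 hgC
    have hae : ∀ᵐ s ∂(volume.restrict (Set.uIoc (0:ℝ) t)), 0 ≤ s := by
      rw [hIoc]
      exact (ae_restrict_mem measurableSet_Ioc).mono fun s hs => le_of_lt hs.1
    have h1 : AEStronglyMeasurable
        (fun s => ∑' p : ℕ × ℕ, (p.1 : ℝ) * (p.2 : ℝ) * c s p.1 * c s p.2
          * (g (p.1 + p.2) - g p.1 - g p.2)) (volume.restrict (Set.uIoc (0:ℝ) t)) :=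
      smol_aesm_tsum (hmeasT g)
        (hae.mono fun s hs => smol_term_summable (hnn s hs) (hsummass s hs) hg0 hgC)
    exact h1.congr (hae.mono fun s hs =>
      (smol_iter_eq_prod (hnn s hs) (hsummass s hs) hg0 hgC).symm)
  have hbd : ∀ (g : ℕ → ℝ), (∀ m, 0 ≤ g m) → (∀ m, g m ≤ C) → ∀ s : ℝ, 0 ≤ s →
      ‖∑' m : ℕ, ∑' m' : ℕ, (m : ℝ) * (m' : ℝ) * c s m * c s m'
        * (g (m + m') - g m - g m')‖ ≤ (2*C) * (∑' m : ℕ, (m : ℝ) * c 0 m)^2 := by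
    intro g hg0 hgC s hs
    rw [smol_iter_eq_prod (hnn s hs) (hsummass s hs) hg0 hgC]
    refine le_trans (smol_norm_tsum_le (hnn s hs) (hsummass s hs) hg0 hgC) ?_
    have h2 : 0 ≤ ∑' m : ℕ, (m : ℝ) * c s m :=
      tsum_nonneg fun m => mul_nonneg (Nat.cast_nonneg m) (hnn s hs m)
    have h1 : (∑' m : ℕ, (m : ℝ) * c s m)^2 ≤ (∑' m : ℕ, (m : ℝ) * c 0 m)^2 :=
      pow_le_pow_left₀ h2 (hmassdec s hs) 2
    nlinarith [hCnn]
  have hDCT : Filter.Tendsto (fun b : ℕ => ∫ s in (0:ℝ)..t, ∑' m : ℕ, ∑' m' : ℕ,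
      (m : ℝ) * (m' : ℝ) * c s m * c s m' * (F b (m + m') - F b m - F b m')) Filter.atTop
      (nhds (∫ s in (0:ℝ)..t, ∑' m : ℕ, ∑' m' : ℕ,
      (m : ℝ) * (m' : ℝ) * c s m * c s m' * (f (m + m') - f m - f m'))) := by
    refine intervalIntegral.tendsto_integral_filter_of_dominated_convergence
      (bound := fun _ => (2*C) * (∑' m : ℕ, (m : ℝ) * c 0 m)^2)
      (Filter.Eventually.of_forall fun b => haes (F b) (hF0 b) (hFC b)) ?_ ?_ ?_
    · refine Filter.Eventually.of_forall fun b => Filter.Eventually.of_forall fun s hs => ?_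
      have hs0 : 0 ≤ s := by rw [hIoc] at hs; exact le_of_lt hs.1
      exact hbd (F b) (hF0 b) (hFC b) s hs0
    · exact intervalIntegrable_const
    · refine Filter.Eventually.of_forall fun s hs => ?_
      have hs0 : 0 ≤ s := by rw [hIoc] at hs; exact le_of_lt hs.1
      have hrw : ∀ b : ℕ, (∑' m : ℕ, ∑' m' : ℕ, (m : ℝ) * (m' : ℝ) * c s m * c s m'
          * (F b (m + m') - F b m - F b m'))
          = ∑' p : ℕ × ℕ, (p.1 : ℝ) * (p.2 : ℝ) * c s p.1 * c s p.2
          * (F b (p.1 + p.2) - F b p.1 - F b p.2) := fun b =>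
        smol_iter_eq_prod (hnn s hs0) (hsummass s hs0) (hF0 b) (hFC b)
      rw [smol_iter_eq_prod (hnn s hs0) (hsummass s hs0) hf hC]
      refine Filter.Tendsto.congr (fun b => (hrw b).symm) ?_
      refine tendsto_tsum_of_dominated_convergence
        (bound := fun p : ℕ × ℕ => (2*C) * (((p.1 : ℝ) * c s p.1) * ((p.2 : ℝ) * c s p.2)))
        ((smol_prodmass_summable (hnn s hs0) (hsummass s hs0)).mul_left (2*C)) ?_ ?_
      · intro p
        refine tendsto_const_nhds.congr' ?_
        filter_upwards [Filter.eventually_ge_atTop (p.1 + p.2 + 1)] with b hb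
        rw [hFeq b (p.1 + p.2) (by omega), hFeq b p.1 (by omega), hFeq b p.2 (by omega)]
      · exact Filter.Eventually.of_forall fun b p =>
          smol_term_norm_le (hnn s hs0) (hF0 b) (hFC b) p
  have h1 : Filter.Tendsto
      (fun b : ℕ => (∑' m : ℕ, c t m * F b m) - (∑' m : ℕ, c 0 m * F b m))
      Filter.atTop (nhds ((∑' m : ℕ, c t m * f m) - (∑' m : ℕ, c 0 m * f m))) :=
    (hLHS t ht).sub (hLHS 0 le_rfl)
  have h2 : Filter.Tendsto
      (fun b : ℕ => (∑' m : ℕ, c t m * F b m) - (∑' m : ℕ, c 0 m * F b m))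
      Filter.atTop (nhds ((1/2) * ∫ s in (0:ℝ)..t, ∑' m : ℕ, ∑' m' : ℕ,
      (m : ℝ) * (m' : ℝ) * c s m * c s m' * (f (m + m') - f m - f m'))) :=
    Filter.Tendsto.congr (fun b => (hkey b).symm) (Filter.Tendsto.const_mul _ hDCT)
  exact tendsto_nhds_unique h1 h2
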